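/- Let h : 𝕌 → Sym(n,ℝ) be smooth with h(u) positive definite for all u, let H : 𝕌 → Sym(n,ℝ) be smooth with H(u)ᵀ = H(u) and h(u)H'(u) = I for all u, and let E be a constant symmetric n×n matrix. Define h̄(u) = (I + H(u)E)ᵀ h(u) (I + H(u)E). Then the smooth map ψ : 𝕌×ℝ×ℝⁿ → 𝕌×ℝ×ℝⁿ given by ψ(u, v̄, x̄) = ( u, v̄ + ½ x̄ᵀE H(u) E x̄ + ½ x̄ᵀE x̄, (I + H(u)E)x̄ ) satisfies ψ* G_ρ(h) = G_ρ(h̄), where G_ρ(h̄)(m)(X₁,X₂) = a₁b₂ + a₂b₁ − ξ₁ᵀh̄(u)ξ₂. In particular, if I + H(u)E is invertible for all u ∈ 𝕌, then ψ is an isometry from the Rosen metric G_ρ(h̄) onto the Rosen metric G_ρ(h). -/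

import Mathlib

open Matrix

attribute [local instance] Matrix.normedAddCommGroup Matrix.normedSpace

noncomputable section

/-- The manifold `ℝ × ℝ × ℝⁿ`, with points `(u, v, x)`. -/
abbrev Mfd (n : ℕ) := ℝ × ℝ × (Fin n → ℝ)

/-- The Rosen metric `2 du dv − dxᵀ h(u) dx`, as a field of bilinear forms. -/
def Gr (n : ℕ) (h : ℝ → Matrix (Fin n) (Fin n) ℝ) :
    Mfd n → Mfd n → Mfd n → ℝ := fun m X₁ X₂ =>
  X₁.1 * X₂.2.1 + X₂.1 * X₁.2.1 - X₁.2.2 ⬝ᵥ (h m.1 *ᵥ X₂.2.2)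

/-- Pullback of a field of bilinear forms under a smooth map. -/
def pull (n : ℕ) (φ : Mfd n → Mfd n) (G : Mfd n → Mfd n → Mfd n → ℝ) :
    Mfd n → Mfd n → Mfd n → ℝ := fun m X Y =>
  G (φ m) (fderiv ℝ φ m X) (fderiv ℝ φ m Y)

/-- Matrix–vector multiplication as a continuous bilinear map. -/
def mvB (n : ℕ) : Matrix (Fin n) (Fin n) ℝ →L[ℝ] (Fin n → ℝ) →L[ℝ] (Fin n → ℝ) :=
  LinearMap.toContinuousLinearMap
  { toFun := fun A => LinearMap.toContinuousLinearMap (Matrix.mulVecLin A)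
    map_add' := fun A B => by ext x i; simp [Matrix.add_mulVec]
    map_smul' := fun c A => by ext x i; simp [Matrix.smul_mulVec] }

@[simp] lemma mvB_apply (n : ℕ) (A : Matrix (Fin n) (Fin n) ℝ) (x : Fin n → ℝ) :
    mvB n A x = A *ᵥ x := rfl

/-- Dot product as a continuous bilinear map. -/
def dpB (n : ℕ) : (Fin n → ℝ) →L[ℝ] (Fin n → ℝ) →L[ℝ] ℝ :=
  LinearMap.toContinuousLinearMap
  { toFun := fun x => LinearMap.toContinuousLinearMap
      { toFun := fun y => x ⬝ᵥ y
        map_add' := fun y z => by simp [dotProduct_add]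
        map_smul' := fun c y => by simp }
    map_add' := fun x y => by ext z; simp [add_dotProduct]
    map_smul' := fun c x => by ext z; simp [smul_dotProduct] }

@[simp] lemma dpB_apply (n : ℕ) (x y : Fin n → ℝ) : dpB n x y = x ⬝ᵥ y := rfl

/-- Right multiplication by a fixed matrix, as a continuous linear map. -/
def reCLM (n : ℕ) (E : Matrix (Fin n) (Fin n) ℝ) :
    Matrix (Fin n) (Fin n) ℝ →L[ℝ] Matrix (Fin n) (Fin n) ℝ :=
  LinearMap.toContinuousLinearMap (LinearMap.mulRight ℝ E)

@[simp] lemma reCLM_apply (n : ℕ) (E M : Matrix (Fin n) (Fin n) ℝ) : reCLM n E M = M * E := rfl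

/-- Left multiplication by a fixed matrix, as a continuous linear map. -/
def leCLM (n : ℕ) (E : Matrix (Fin n) (Fin n) ℝ) :
    Matrix (Fin n) (Fin n) ℝ →L[ℝ] Matrix (Fin n) (Fin n) ℝ :=
  LinearMap.toContinuousLinearMap (LinearMap.mulLeft ℝ E)

@[simp] lemma leCLM_apply (n : ℕ) (E M : Matrix (Fin n) (Fin n) ℝ) : leCLM n E M = E * M := rfl

lemma key3 {n : ℕ} (P M : Matrix (Fin n) (Fin n) ℝ) (y w : Fin n → ℝ) :
    (P *ᵥ y) ⬝ᵥ (M *ᵥ w) = y ⬝ᵥ ((Pᵀ * M) *ᵥ w) := by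
  rw [dotProduct_mulVec, dotProduct_mulVec, ← vecMul_vecMul, vecMul_transpose]

lemma dsymm {n : ℕ} (P : Matrix (Fin n) (Fin n) ℝ) (a b : Fin n → ℝ) :
    a ⬝ᵥ (P *ᵥ b) = b ⬝ᵥ (Pᵀ *ᵥ a) := by
  rw [dotProduct_mulVec, mulVec_transpose, dotProduct_comm]

@[simp] lemma mvB_precompR (n : ℕ) (A : Matrix (Fin n) (Fin n) ℝ)
    (f : Mfd n →L[ℝ] (Fin n → ℝ)) (X : Mfd n) :
    ContinuousLinearMap.precompR (Mfd n) (mvB n) A f X = A *ᵥ f X := rfl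

@[simp] lemma mvB_precompL (n : ℕ) (f : Mfd n →L[ℝ] Matrix (Fin n) (Fin n) ℝ)
    (x : Fin n → ℝ) (X : Mfd n) :
    ContinuousLinearMap.precompL (Mfd n) (mvB n) f x X = f X *ᵥ x := rfl

@[simp] lemma reCLM_comp_apply (n : ℕ) (E : Matrix (Fin n) (Fin n) ℝ)
    (f : Mfd n →L[ℝ] Matrix (Fin n) (Fin n) ℝ) (X : Mfd n) :
    (reCLM n E).comp f X = f X * E := rfl

@[simp] lemma leCLM_comp_apply (n : ℕ) (E : Matrix (Fin n) (Fin n) ℝ)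
    (f : Mfd n →L[ℝ] Matrix (Fin n) (Fin n) ℝ) (X : Mfd n) :
    (leCLM n E).comp f X = E * f X := rfl

@[simp] lemma tss_comp_fst_apply (n : ℕ) (A : Matrix (Fin n) (Fin n) ℝ) (X : Mfd n) :
    ((ContinuousLinearMap.toSpanSingleton ℝ A).comp
      (ContinuousLinearMap.fst ℝ ℝ (ℝ × (Fin n → ℝ)))) X = X.1 • A := rfl

/-- The derivative of `ψ`. -/
lemma psi_hasFDerivAt (n : ℕ) (H : ℝ → Matrix (Fin n) (Fin n) ℝ)
    (E : Matrix (Fin n) (Fin n) ℝ) (m : Mfd n) (hd : HasDerivAt H (deriv H m.1) m.1) :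
    ∃ L : Mfd n →L[ℝ] Mfd n,
      HasFDerivAt (fun p : Mfd n =>
        (p.1,
         p.2.1 + (1 / 2) * (p.2.2 ⬝ᵥ ((E * H p.1 * E) *ᵥ p.2.2))
              + (1 / 2) * (p.2.2 ⬝ᵥ (E *ᵥ p.2.2)),
         (1 + H p.1 * E) *ᵥ p.2.2)) L m ∧
      ∀ X : Mfd n, L X =
        (X.1,
         X.2.1 + (1 / 2) * (X.2.2 ⬝ᵥ ((E * (H m.1 * E)) *ᵥ m.2.2)
              + (X.1 * (m.2.2 ⬝ᵥ ((E * (deriv H m.1 * E)) *ᵥ m.2.2))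
                 + m.2.2 ⬝ᵥ ((E * (H m.1 * E)) *ᵥ X.2.2)))
              + (1 / 2) * (X.2.2 ⬝ᵥ (E *ᵥ m.2.2) + m.2.2 ⬝ᵥ (E *ᵥ X.2.2)),
         X.1 • ((deriv H m.1 * E) *ᵥ m.2.2) + (1 + H m.1 * E) *ᵥ X.2.2) := by
  have hx2 : HasFDerivAt (fun p : Mfd n => p.2.2)
      ((ContinuousLinearMap.snd ℝ ℝ (Fin n → ℝ)).comp
        (ContinuousLinearMap.snd ℝ ℝ (ℝ × (Fin n → ℝ)))) m :=
    hasFDerivAt_snd.comp m hasFDerivAt_snd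
  have hv : HasFDerivAt (fun p : Mfd n => p.2.1)
      ((ContinuousLinearMap.fst ℝ ℝ (Fin n → ℝ)).comp
        (ContinuousLinearMap.snd ℝ ℝ (ℝ × (Fin n → ℝ)))) m :=
    hasFDerivAt_fst.comp m hasFDerivAt_snd
  have hHc : HasFDerivAt (fun p : Mfd n => H p.1) _ m :=
    hd.hasFDerivAt.comp m hasFDerivAt_fst
  have hA : HasFDerivAt (fun p : Mfd n => 1 + H p.1 * E) _ m :=
    (((reCLM n E).hasFDerivAt.comp m hHc).const_add 1)
  have hW : HasFDerivAt (fun p : Mfd n => E * H p.1 * E) _ m :=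
    (reCLM n E).hasFDerivAt.comp m ((leCLM n E).hasFDerivAt.comp m hHc)
  have hg : HasFDerivAt (fun p : Mfd n => mvB n (1 + H p.1 * E) (p.2.2)) _ m :=
    (mvB n).hasFDerivAt_of_bilinear hA hx2
  have hqAin : HasFDerivAt (fun p : Mfd n => mvB n (E * H p.1 * E) (p.2.2)) _ m :=
    (mvB n).hasFDerivAt_of_bilinear hW hx2
  have hqA : HasFDerivAt (fun p : Mfd n => dpB n (p.2.2) (mvB n (E * H p.1 * E) (p.2.2))) _ m :=
    (dpB n).hasFDerivAt_of_bilinear hx2 hqAin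
  have hqE : HasFDerivAt (fun p : Mfd n => dpB n (p.2.2) (mvB n E (p.2.2))) _ m :=
    (dpB n).hasFDerivAt_of_bilinear hx2 ((mvB n E).hasFDerivAt.comp m hx2)
  have hf := (hv.add (hqA.const_mul (1/2))).add (hqE.const_mul (1/2))
  have hψ := HasFDerivAt.prodMk hasFDerivAt_fst (hf.prodMk hg)
  refine ⟨_, hψ, fun X => ?_⟩
  simp [ContinuousLinearMap.precompR_apply, mul_assoc]
  erw [mvB_precompL, mvB_precompL]
  erw [reCLM_comp_apply, reCLM_comp_apply, leCLM_comp_apply, tss_comp_fst_apply]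
  simp [mul_assoc, Matrix.smul_mul, Matrix.mul_smul, Matrix.smul_mulVec]
  refine ⟨by ring, ?_⟩
  rw [Matrix.add_mulVec, Matrix.one_mulVec]
  abel

/-- with `hH'(u) = I`, `E` constant symmetric, and
`h̄ = (I + HE)ᵀ h (I + HE)`, the map
`ψ(u,v̄,x̄) = (u, v̄ + ½x̄ᵀEHEx̄ + ½x̄ᵀEx̄, (I + HE)x̄)` satisfies `ψ*G_ρ(h) = G_ρ(h̄)`;
in particular when `I + H(u)E` is invertible for all `u`, `ψ` is an isometry from
`G_ρ(h̄)` onto `G_ρ(h)`. -/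
theorem stmt14 (n : ℕ) (hn : 1 ≤ n)
    (U : Set ℝ) (hUopen : IsOpen U) (hUconv : Convex ℝ U) (hUne : U.Nonempty)
    (h : ℝ → Matrix (Fin n) (Fin n) ℝ)
    (hhsmooth : ContDiffOn ℝ (⊤ : ℕ∞) h U)
    (hhpos : ∀ u ∈ U, (h u).PosDef)
    (H : ℝ → Matrix (Fin n) (Fin n) ℝ)
    (hHsmooth : ContDiffOn ℝ (⊤ : ℕ∞) H U)
    (hHsymm : ∀ u ∈ U, (H u)ᵀ = H u)
    (hHprim : ∀ u ∈ U, h u * deriv H u = 1)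
    (E : Matrix (Fin n) (Fin n) ℝ) (hE : Eᵀ = E)
    (hbar : ℝ → Matrix (Fin n) (Fin n) ℝ)
    (hhbar : ∀ u : ℝ, hbar u = (1 + H u * E)ᵀ * h u * (1 + H u * E))
    (ψ : Mfd n → Mfd n)
    (hψ : ψ = fun m =>
      (m.1,
       m.2.1 + (1 / 2) * (m.2.2 ⬝ᵥ ((E * H m.1 * E) *ᵥ m.2.2))
            + (1 / 2) * (m.2.2 ⬝ᵥ (E *ᵥ m.2.2)),
       (1 + H m.1 * E) *ᵥ m.2.2)) :
    (∀ m ∈ {m : Mfd n | m.1 ∈ U}, ∀ X Y,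
      pull n ψ (Gr n h) m X Y = Gr n hbar m X Y) ∧
    ((∀ u ∈ U, IsUnit (1 + H u * E)) →
      Set.BijOn ψ {m : Mfd n | m.1 ∈ U} {m : Mfd n | m.1 ∈ U}) := by
  constructor
  · intro m hm X Y
    have hu : m.1 ∈ U := hm
    have hd : HasDerivAt H (deriv H m.1) m.1 :=
      ((hHsmooth.differentiableOn (by simp)).differentiableAt (hUopen.mem_nhds hu)).hasDerivAt
    obtain ⟨L, hL, hLX⟩ := psi_hasFDerivAt n H E m hd
    have hL' : HasFDerivAt ψ L m := by rw [hψ]; exact hL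
    simp only [pull, Gr]
    rw [hL'.fderiv]
    simp only [hLX, hψ]
    -- matrix facts
    have hsy : (h m.1)ᵀ = h m.1 := by
      have := (hhpos m.1 hu).1
      rwa [Matrix.IsHermitian, conjTranspose_eq_transpose_of_trivial] at this
    have hDh : (deriv H m.1)ᵀ * h m.1 = 1 := by
      have h2 : (h m.1 * deriv H m.1)ᵀ = 1 := by rw [hHprim m.1 hu, transpose_one]
      rwa [transpose_mul, hsy] at h2
    have hWsym : (E * (H m.1 * E))ᵀ = E * (H m.1 * E) := by
      rw [transpose_mul, transpose_mul, hE, hHsymm m.1 hu, Matrix.mul_assoc]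
    have fact0 : (deriv H m.1 * E)ᵀ * h m.1 = E := by
      rw [transpose_mul, hE, Matrix.mul_assoc, hDh, mul_one]
    have hAh : (1 + H m.1 * E)ᵀ * h m.1 * (deriv H m.1 * E) = E + E * (H m.1 * E) := by
      have h1 : (1 + H m.1 * E)ᵀ = 1 + E * H m.1 := by
        rw [transpose_add, transpose_one, transpose_mul, hE, hHsymm m.1 hu]
      rw [h1, add_mul, add_mul, one_mul, Matrix.mul_assoc (E * H m.1) (h m.1) (deriv H m.1 * E),
        ← Matrix.mul_assoc (h m.1) (deriv H m.1) E, hHprim m.1 hu, one_mul, Matrix.mul_assoc]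
    have c1 : ((deriv H m.1 * E) *ᵥ m.2.2) ⬝ᵥ (h m.1 *ᵥ ((deriv H m.1 * E) *ᵥ m.2.2))
        = m.2.2 ⬝ᵥ ((E * (deriv H m.1 * E)) *ᵥ m.2.2) := by
      rw [key3, fact0, mulVec_mulVec]
    have c2 : ∀ ξ, ((deriv H m.1 * E) *ᵥ m.2.2) ⬝ᵥ (h m.1 *ᵥ ((1 + H m.1 * E) *ᵥ ξ))
        = m.2.2 ⬝ᵥ (E *ᵥ ξ) + m.2.2 ⬝ᵥ ((E * (H m.1 * E)) *ᵥ ξ) := by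
      intro ξ
      rw [key3, fact0, mulVec_mulVec, mul_add, mul_one, Matrix.add_mulVec, dotProduct_add]
    have c3 : ∀ ξ, ((1 + H m.1 * E) *ᵥ ξ) ⬝ᵥ (h m.1 *ᵥ ((deriv H m.1 * E) *ᵥ m.2.2))
        = ξ ⬝ᵥ ((E * (H m.1 * E)) *ᵥ m.2.2) + ξ ⬝ᵥ (E *ᵥ m.2.2) := by
      intro ξ
      rw [key3, mulVec_mulVec, hAh, Matrix.add_mulVec, dotProduct_add, add_comm]
    have c4 : ((1 + H m.1 * E) *ᵥ X.2.2) ⬝ᵥ (h m.1 *ᵥ ((1 + H m.1 * E) *ᵥ Y.2.2))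
        = X.2.2 ⬝ᵥ (hbar m.1 *ᵥ Y.2.2) := by
      rw [key3, mulVec_mulVec, ← hhbar]
    have s1 : m.2.2 ⬝ᵥ ((E * (H m.1 * E)) *ᵥ X.2.2) = X.2.2 ⬝ᵥ ((E * (H m.1 * E)) *ᵥ m.2.2) := by
      rw [dsymm, hWsym]
    have s2 : m.2.2 ⬝ᵥ (E *ᵥ X.2.2) = X.2.2 ⬝ᵥ (E *ᵥ m.2.2) := by rw [dsymm, hE]
    have s3 : Y.2.2 ⬝ᵥ ((E * (H m.1 * E)) *ᵥ m.2.2) = m.2.2 ⬝ᵥ ((E * (H m.1 * E)) *ᵥ Y.2.2) := by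
      rw [dsymm, hWsym]
    have s4 : Y.2.2 ⬝ᵥ (E *ᵥ m.2.2) = m.2.2 ⬝ᵥ (E *ᵥ Y.2.2) := by rw [dsymm, hE]
    simp only [Matrix.mulVec_add, Matrix.mulVec_smul, add_dotProduct, dotProduct_add,
      smul_dotProduct, dotProduct_smul, smul_eq_mul]
    rw [c1, c2 Y.2.2, c3 X.2.2, c4, s1, s2, s3, s4]
    ring
  · intro hun
    have hinv : ∀ u ∈ U, IsUnit (1 + H u * E).det := fun u hu =>
      (Matrix.isUnit_iff_isUnit_det _).mp (hun u hu)
    refine ⟨?_, ?_, ?_⟩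
    · intro p hp
      simp only [hψ, Set.mem_setOf_eq]
      exact hp
    · intro p hp q hq hpq
      simp only [hψ, Prod.mk.injEq] at hpq
      obtain ⟨h1, h2, h3⟩ := hpq
      have hu : p.1 ∈ U := hp
      rw [← h1] at h3 h2
      have hx : p.2.2 = q.2.2 := by
        have := congrArg (fun w => (1 + H p.1 * E)⁻¹ *ᵥ w) h3
        simpa [Matrix.mulVec_mulVec, Matrix.nonsing_inv_mul _ (hinv p.1 hu),
          Matrix.one_mulVec] using this
      rw [← hx] at h2
      have hv : p.2.1 = q.2.1 := by linarith
      exact Prod.ext h1 (Prod.ext hv hx)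
    · intro m hm
      have hu : m.1 ∈ U := hm
      refine ⟨(m.1,
        m.2.1 - (1/2) * (((1 + H m.1 * E)⁻¹ *ᵥ m.2.2) ⬝ᵥ ((E * H m.1 * E) *ᵥ ((1 + H m.1 * E)⁻¹ *ᵥ m.2.2)))
             - (1/2) * (((1 + H m.1 * E)⁻¹ *ᵥ m.2.2) ⬝ᵥ (E *ᵥ ((1 + H m.1 * E)⁻¹ *ᵥ m.2.2))),
        (1 + H m.1 * E)⁻¹ *ᵥ m.2.2), hm, ?_⟩
      simp only [hψ]
      have h3 : (1 + H m.1 * E) *ᵥ ((1 + H m.1 * E)⁻¹ *ᵥ m.2.2) = m.2.2 := by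
        rw [Matrix.mulVec_mulVec, Matrix.mul_nonsing_inv _ (hinv m.1 hu), Matrix.one_mulVec]
      exact Prod.ext rfl (Prod.ext (by ring) h3)
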